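/- Let X be a finite nonempty set, Z a set, and D : Z × Z → [0,1] a metric-like loss with constant C ≥ 1. Let F be a finite set of functions from X to Z, f* ∈ F, T ≥ 1 an integer, β ≥ 0 a real number, x^(1),…,x^(T) ∈ X a sequence of covariates, and f̂^(1),…,f̂^(T) : X → Z arbitrary functions (not necessarily in F) satisfying the offline estimation guarantee with parameter β relative to f*: for every t ∈ {1,…,T}, ∑_{s=1}^{t−1} D(f̂^(t)(x^(s)), f*(x^(s))) ≤ β. For each t define the version space F_t := { f ∈ F : for all s ∈ {1,…,t}, ∑_{τ=1}^{s−1} D(f̂^(s)(x^(τ)), f(x^(τ))) ≤ β }. Then f* ∈ F_t for every t (in particular each F_t is nonempty), and ∑_{t=1}^{T} (1/|F_t|) ∑_{f ∈ F_t} D(f(x^(t)), f*(x^(t))) ≤ (2Cβ+1)·log|F|, and also ∑_{t=1}^{T} (1/|F_t|) ∑_{f ∈ F_t} D(f(x^(t)), f*(x^(t))) ≤ 3(2Cβ+1)·|X|·(1 + log T). -/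

import Mathlib

private lemma inv_le_log_sub {i : ℕ} (hi : 2 ≤ i) :
    ((i : ℝ))⁻¹ ≤ Real.log i - Real.log ((i : ℝ) - 1) := by
  have h2 : (2:ℝ) ≤ (i:ℝ) := by exact_mod_cast hi
  have h1 : (0:ℝ) < (i:ℝ) - 1 := by linarith
  have hi0 : (0:ℝ) < i := by linarith
  have hlog := Real.log_le_sub_one_of_pos (x := ((i:ℝ)-1)/i) (by positivity)
  rw [Real.log_div (by linarith) (by positivity)] at hlog
  have he : ((i:ℝ)-1)/i - 1 = -(i:ℝ)⁻¹ := by field_simp; ring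
  linarith [hlog, he ▸ hlog]

private lemma sum_Icc_two_inv_le_log : ∀ N : ℕ, ∑ i ∈ Finset.Icc 2 N, ((i:ℝ))⁻¹ ≤ Real.log N := by
  intro N
  induction N with
  | zero => simp
  | succ n ih =>
    rcases Nat.lt_or_ge n 1 with h | h
    · interval_cases n <;> simp
    · rw [Finset.sum_Icc_succ_top (by omega)]
      have h2 : 2 ≤ n + 1 := by omega
      have hkey := inv_le_log_sub (i := n+1) h2
      have hc : ((n+1:ℕ):ℝ) - 1 = (n:ℝ) := by push_cast; ring
      rw [hc] at hkey
      push_cast at hkey ih ⊢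
      linarith

private lemma sum_Icc_one_inv_le (N : ℕ) :
    ∑ i ∈ Finset.Icc 1 N, ((i:ℝ))⁻¹ ≤ 1 + Real.log N := by
  rcases Nat.eq_zero_or_pos N with h | h
  · subst h; simp
  · have hins : Finset.Icc 1 N = insert 1 (Finset.Icc 2 N) := by
      ext i; simp only [Finset.mem_Icc, Finset.mem_insert]; omega
    rw [hins, Finset.sum_insert (by simp)]
    have := sum_Icc_two_inv_le_log N
    norm_num
    linarith

private lemma dc_eq_Icc {T : ℕ} (S : Finset ℕ) (hS : S ⊆ Finset.Icc 1 T)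
    (hdc : ∀ t ∈ S, ∀ s, 1 ≤ s → s ≤ t → s ∈ S) : S = Finset.Icc 1 S.card := by
  ext t
  simp only [Finset.mem_Icc]
  constructor
  · intro ht
    have h1 : 1 ≤ t := (Finset.mem_Icc.mp (hS ht)).1
    have hsub : Finset.Icc 1 t ⊆ S := fun s hs =>
      hdc t ht s (Finset.mem_Icc.mp hs).1 (Finset.mem_Icc.mp hs).2
    have := Finset.card_le_card hsub
    rw [Nat.card_Icc] at this
    omega
  · rintro ⟨h1, h2⟩
    by_contra hns
    have hsub : S ⊆ Finset.Icc 1 (t-1) := by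
      intro u hu
      have hu' := Finset.mem_Icc.mp (hS hu)
      have hut : u < t := by
        by_contra hge
        exact hns (hdc u hu t h1 (by omega))
      exact Finset.mem_Icc.mpr ⟨hu'.1, by omega⟩
    have := Finset.card_le_card hsub
    rw [Nat.card_Icc] at this
    omega

private lemma exists_rank {α : Type*} [DecidableEq α] (F : Finset α) (fstar : α) (hfstar : fstar ∈ F)
    (τ : α → ℕ) (hτ : ∀ g ∈ F, τ g ≤ τ fstar) :
    ∃ r : α → ℕ,
      (∀ f ∈ F, 1 ≤ r f) ∧
      (∀ f ∈ F, ∀ t, t ≤ τ f → r f ≤ (F.filter (fun g => t ≤ τ g)).card) ∧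
      (∑ f ∈ F.erase fstar, ((r f : ℝ))⁻¹ ≤ Real.log F.card) := by
  classical
  set N := F.card with hN
  let ι : α → ℕ := fun f => if h : f ∈ F then ((Fintype.equivFin ↥F) ⟨f, h⟩ : ℕ) else 0
  have hιlt : ∀ f ∈ F, ι f < N := by
    intro f h
    have hlt := ((Fintype.equivFin ↥F) ⟨f, h⟩).isLt
    simp only [ι, dif_pos h]
    rw [hN, ← Fintype.card_coe F]
    exact hlt
  have hιinj : ∀ f ∈ F, ∀ g ∈ F, ι f = ι g → f = g := by
    intro f hf g hg h
    simp only [ι, dif_pos hf, dif_pos hg] at h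
    have h2 := (Fintype.equivFin ↥F).injective (Fin.val_injective h)
    exact congrArg Subtype.val h2
  let tie : α → ℕ := fun f => if f = fstar then N+1 else ι f
  have htie_le : ∀ f ∈ F, tie f ≤ N + 1 := by
    intro f hf
    by_cases h : f = fstar
    · simp [tie, h]
    · simp only [tie, if_neg h]
      exact le_of_lt (lt_of_lt_of_le (hιlt f hf) (by omega))
  let key : α → ℕ := fun f => τ f * (N+2) + tie f
  have hkeyτ : ∀ f ∈ F, ∀ g ∈ F, key f ≤ key g → τ f ≤ τ g := by
    intro f hf g hg h
    by_contra hlt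
    push_neg at hlt
    have hmul := Nat.mul_le_mul_right (N+2) (show τ g + 1 ≤ τ f by omega)
    have h1 := htie_le f hf
    have h2 := htie_le g hg
    simp only [key] at h
    nlinarith [hmul]
  have hkeyinj : ∀ f ∈ F, ∀ g ∈ F, key f = key g → f = g := by
    intro f hf g hg h
    have hττ : τ f = τ g :=
      le_antisymm (hkeyτ f hf g hg h.le) (hkeyτ g hg f hf h.ge)
    have htie : tie f = tie g := by
      simp only [key, hττ] at h; omega
    by_cases h1 : f = fstar <;> by_cases h2 : g = fstar
    · rw [h1, h2]
    · exfalso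
      simp only [tie, if_pos h1, if_neg h2] at htie
      have := hιlt g hg
      omega
    · exfalso
      simp only [tie, if_neg h1, if_pos h2] at htie
      have := hιlt f hf
      omega
    · simp only [tie, if_neg h1, if_neg h2] at htie
      exact hιinj f hf g hg htie
  have hkeystar : ∀ f ∈ F, key f ≤ key fstar := by
    intro f hf
    have hle := hτ f hf
    rcases lt_or_eq_of_le hle with h | h
    · have hmul := Nat.mul_le_mul_right (N+2) (show τ f + 1 ≤ τ fstar by omega)
      have h1 := htie_le f hf
      have h2 := htie_le fstar hfstar
      simp only [key]
      nlinarith [hmul]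
    · simp only [key, h]
      have := htie_le f hf
      have : tie f ≤ tie fstar := by
        simp only [tie, if_pos rfl]
        by_cases hf' : f = fstar
        · simp [tie, hf']
        · simp only [tie, if_neg hf']
          exact le_of_lt (lt_of_lt_of_le (hιlt f hf) (by omega))
      omega
  set r : α → ℕ := fun f => (F.filter (fun g => key f ≤ key g)).card with hr
  refine ⟨r, ?_, ?_, ?_⟩
  · intro f hf
    have : f ∈ F.filter (fun g => key f ≤ key g) := Finset.mem_filter.mpr ⟨hf, le_refl _⟩
    exact Finset.card_pos.mpr ⟨f, this⟩
  · intro f hf t ht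
    apply Finset.card_le_card
    intro g hg
    obtain ⟨hgF, hkey⟩ := Finset.mem_filter.mp hg
    exact Finset.mem_filter.mpr ⟨hgF, le_trans ht (hkeyτ f hf g hgF hkey)⟩
  · -- rank ≥ 2 on erase, rank ≤ N, rank injective on F
    have hr2 : ∀ f ∈ F, f ≠ fstar → 2 ≤ r f := by
      intro f hf hne
      have hsub : ({f, fstar} : Finset α) ⊆ F.filter (fun g => key f ≤ key g) := by
        intro g hg
        rcases Finset.mem_insert.mp hg with rfl | hg
        · exact Finset.mem_filter.mpr ⟨hf, le_refl _⟩
        · rw [Finset.mem_singleton] at hg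
          subst hg
          exact Finset.mem_filter.mpr ⟨hfstar, hkeystar f hf⟩
      have := Finset.card_le_card hsub
      rwa [Finset.card_pair hne] at this
    have hrN : ∀ f, r f ≤ N := fun f => Finset.card_le_card (Finset.filter_subset _ _)
    have hrlt : ∀ f ∈ F, ∀ g ∈ F, key f < key g → r g < r f := by
      intro f hf g hg hk
      apply Finset.card_lt_card
      rw [Finset.ssubset_iff_of_subset]
      · exact ⟨f, Finset.mem_filter.mpr ⟨hf, le_refl _⟩,
          fun hmem => absurd (Finset.mem_filter.mp hmem).2 (by omega)⟩
      · intro u hu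
        obtain ⟨huF, hku⟩ := Finset.mem_filter.mp hu
        exact Finset.mem_filter.mpr ⟨huF, le_trans hk.le hku⟩
    have hrinj : ∀ f ∈ F.erase fstar, ∀ g ∈ F.erase fstar, r f = r g → f = g := by
      intro f hf g hg h
      have hfF := Finset.mem_of_mem_erase hf
      have hgF := Finset.mem_of_mem_erase hg
      by_contra hne
      rcases lt_trichotomy (key f) (key g) with hk | hk | hk
      · exact absurd h (Nat.ne_of_gt (hrlt f hfF g hgF hk))
      · exact hne (hkeyinj f hfF g hgF hk)
      · exact absurd h (Nat.ne_of_lt (hrlt g hgF f hfF hk))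
    have himg : (F.erase fstar).image r ⊆ Finset.Icc 2 N := by
      intro i hi
      obtain ⟨f, hf, rfl⟩ := Finset.mem_image.mp hi
      exact Finset.mem_Icc.mpr ⟨hr2 f (Finset.mem_of_mem_erase hf) (Finset.ne_of_mem_erase hf),
        hrN f⟩
    calc ∑ f ∈ F.erase fstar, ((r f : ℝ))⁻¹
        = ∑ i ∈ (F.erase fstar).image r, ((i : ℝ))⁻¹ := by rw [Finset.sum_image hrinj]
      _ ≤ ∑ i ∈ Finset.Icc 2 N, ((i : ℝ))⁻¹ :=
          Finset.sum_le_sum_of_subset_of_nonneg himg (fun i _ _ => by positivity)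
      _ ≤ Real.log N := sum_Icc_two_inv_le_log N
open Classical in
/-- Main upper bound for Oracle-Efficient Online Estimation via the
Version Space Averaging algorithm: given a metric-like loss `D` with constant `C`, a finite
class `F` containing the target `f*`, and offline estimators `f̂^(t)` satisfying the offline
guarantee with parameter `β`, the version spaces `F_t` all contain `f*`, and the online
estimation error of uniform sampling from `F_t` is bounded by `(2Cβ+1) log |F|` and by
`3(2Cβ+1)|X|(1 + log T)`. -/
theorem version_space_averaging_main_upper_bound {X Z : Type*} [Fintype X] [Nonempty X]
    (D : Z → Z → ℝ) (C : ℝ) (hC : 1 ≤ C)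
    (hD01 : ∀ z₁ z₂, D z₁ z₂ ∈ Set.Icc (0 : ℝ) 1)
    (hDsymm : ∀ z₁ z₂, D z₁ z₂ = D z₂ z₁)
    (hDdiag : ∀ z, D z z = 0)
    (hDtri : ∀ z₁ z₂ z₃, D z₁ z₂ ≤ C * (D z₁ z₃ + D z₃ z₂))
    (F : Finset (X → Z)) (fstar : X → Z) (hfstar : fstar ∈ F)
    (T : ℕ) (hT : 1 ≤ T) (β : ℝ) (hβ : 0 ≤ β)
    (x : ℕ → X) (fhat : ℕ → X → Z)
    (hoff : ∀ t ∈ Finset.Icc 1 T,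
      ∑ s ∈ Finset.Icc 1 (t - 1), D (fhat t (x s)) (fstar (x s)) ≤ β)
    (Fs : ℕ → Finset (X → Z))
    (hFs : ∀ t, Fs t = F.filter (fun f => ∀ s ∈ Finset.Icc 1 t,
      ∑ τ ∈ Finset.Icc 1 (s - 1), D (fhat s (x τ)) (f (x τ)) ≤ β)) :
    (∀ t ∈ Finset.Icc 1 T, fstar ∈ Fs t) ∧
    (∑ t ∈ Finset.Icc 1 T, ((Fs t).card : ℝ)⁻¹ * ∑ f ∈ Fs t, D (f (x t)) (fstar (x t))
        ≤ (2 * C * β + 1) * Real.log (F.card)) ∧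
    (∑ t ∈ Finset.Icc 1 T, ((Fs t).card : ℝ)⁻¹ * ∑ f ∈ Fs t, D (f (x t)) (fstar (x t))
        ≤ 3 * (2 * C * β + 1) * (Fintype.card X) * (1 + Real.log T)) := by
  classical
  have hdnn : ∀ (t : ℕ) (f : X → Z), 0 ≤ D (f (x t)) (fstar (x t)) := fun t f => (hD01 _ _).1
  have hdle1 : ∀ (t : ℕ) (f : X → Z), D (f (x t)) (fstar (x t)) ≤ 1 := fun t f => (hD01 _ _).2
  have hB0 : (0:ℝ) ≤ 2 * C * β := by nlinarith
  have hB1 : (0:ℝ) ≤ 2 * C * β + 1 := by linarith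
  have hFsmem : ∀ (t : ℕ) (f : X → Z), f ∈ Fs t ↔ f ∈ F ∧ ∀ s ∈ Finset.Icc 1 t,
      ∑ τ ∈ Finset.Icc 1 (s - 1), D (fhat s (x τ)) (f (x τ)) ≤ β := by
    intro t f
    rw [hFs]
    simp only [Finset.mem_filter]
  -- Part 1
  have hpart1 : ∀ t ∈ Finset.Icc 1 T, fstar ∈ Fs t := by
    intro t ht
    refine (hFsmem t fstar).mpr ⟨hfstar, fun s hs => ?_⟩
    have hs' := Finset.mem_Icc.mp hs
    have ht' := Finset.mem_Icc.mp ht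
    exact hoff s (Finset.mem_Icc.mpr ⟨hs'.1, hs'.2.trans ht'.2⟩)
  have hFsub : ∀ t, Fs t ⊆ F := fun t f hf => ((hFsmem t f).mp hf).1
  -- Key lemma: members of the version space are close to fstar on history
  have hL2 : ∀ t ∈ Finset.Icc 1 T, ∀ f ∈ Fs t,
      ∑ s ∈ Finset.Icc 1 (t-1), D (f (x s)) (fstar (x s)) ≤ 2 * C * β := by
    intro t ht f hf
    obtain ⟨hfF, hcond⟩ := (hFsmem t f).mp hf
    have ht' := Finset.mem_Icc.mp ht
    have h1 := hcond t (Finset.mem_Icc.mpr ⟨ht'.1, le_refl t⟩)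
    have h2 := hoff t ht
    calc ∑ s ∈ Finset.Icc 1 (t-1), D (f (x s)) (fstar (x s))
        ≤ ∑ s ∈ Finset.Icc 1 (t-1),
            C * (D (f (x s)) (fhat t (x s)) + D (fhat t (x s)) (fstar (x s))) :=
          Finset.sum_le_sum (fun s _ => hDtri _ _ _)
      _ = C * ∑ s ∈ Finset.Icc 1 (t-1),
            (D (fhat t (x s)) (f (x s)) + D (fhat t (x s)) (fstar (x s))) := by
          rw [← Finset.mul_sum]
          exact congrArg (C * ·) (Finset.sum_congr rfl (fun s _ => by rw [hDsymm (f (x s))]))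
      _ = C * ((∑ s ∈ Finset.Icc 1 (t-1), D (fhat t (x s)) (f (x s))) +
            ∑ s ∈ Finset.Icc 1 (t-1), D (fhat t (x s)) (fstar (x s))) := by
          rw [Finset.sum_add_distrib]
      _ ≤ C * (β + β) :=
          mul_le_mul_of_nonneg_left (add_le_add h1 h2) (by linarith)
      _ = 2 * C * β := by ring
  refine ⟨hpart1, ?_, ?_⟩
  · -- Bound 2 : (2Cβ+1) log |F|
    let τ : (X → Z) → ℕ := fun f => ((Finset.Icc 1 T).filter (fun t => f ∈ Fs t)).card
    have hSdc : ∀ f : X → Z,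
        ((Finset.Icc 1 T).filter (fun t => f ∈ Fs t)) = Finset.Icc 1 (τ f) := by
      intro f
      apply dc_eq_Icc _ (Finset.filter_subset _ _)
      intro t ht s h1 hst
      obtain ⟨htT, htm⟩ := Finset.mem_filter.mp ht
      have htT' := Finset.mem_Icc.mp htT
      refine Finset.mem_filter.mpr ⟨Finset.mem_Icc.mpr ⟨h1, le_trans hst htT'.2⟩, ?_⟩
      obtain ⟨hfF, hc⟩ := (hFsmem t f).mp htm
      refine (hFsmem s f).mpr ⟨hfF, fun u hu => ?_⟩
      have hu' := Finset.mem_Icc.mp hu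
      exact hc u (Finset.mem_Icc.mpr ⟨hu'.1, le_trans hu'.2 hst⟩)
    have hτstar : ∀ g ∈ F, τ g ≤ τ fstar := by
      intro g hg
      have heq : ((Finset.Icc 1 T).filter (fun t => fstar ∈ Fs t)) = Finset.Icc 1 T :=
        Finset.filter_true_of_mem (fun t ht => hpart1 t ht)
      show ((Finset.Icc 1 T).filter (fun t => g ∈ Fs t)).card
        ≤ ((Finset.Icc 1 T).filter (fun t => fstar ∈ Fs t)).card
      rw [heq]
      exact Finset.card_le_card (Finset.filter_subset _ _)
    obtain ⟨r, hr1, hrle, hrsum⟩ := exists_rank F fstar hfstar τ hτstar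
    -- budget for each f
    have hbudget : ∀ f ∈ F,
        ∑ t ∈ Finset.Icc 1 (τ f), D (f (x t)) (fstar (x t)) ≤ 2*C*β + 1 := by
      intro f hf
      rcases Nat.eq_zero_or_pos (τ f) with h0 | h0
      · rw [h0]; simp; linarith
      · obtain ⟨k, hk⟩ : ∃ k, τ f = k + 1 := ⟨τ f - 1, by omega⟩
        rw [hk, Finset.sum_Icc_succ_top (by omega)]
        have hmem : (k+1) ∈ (Finset.Icc 1 T).filter (fun t => f ∈ Fs t) := by
          rw [hSdc f, hk]
          exact Finset.mem_Icc.mpr ⟨by omega, le_refl _⟩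
        obtain ⟨hT1, hFsm⟩ := Finset.mem_filter.mp hmem
        have hh := hL2 (k+1) hT1 f hFsm
        simp only [Nat.add_sub_cancel] at hh
        have hd1 := hdle1 (k+1) f
        linarith
    -- rank lower bounds the version space size along f's survival
    have hrn : ∀ f ∈ F, ∀ t ∈ Finset.Icc 1 (τ f), (r f : ℝ) ≤ ((Fs t).card : ℝ) := by
      intro f hf t ht
      have htf : t ∈ (Finset.Icc 1 T).filter (fun u => f ∈ Fs u) := by rw [hSdc f]; exact ht
      obtain ⟨htT, _⟩ := Finset.mem_filter.mp htf
      have h1t : 1 ≤ t := (Finset.mem_Icc.mp htT).1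
      have hsub2 : F.filter (fun g => t ≤ τ g) ⊆ Fs t := by
        intro g hg
        obtain ⟨hgF, hgt⟩ := Finset.mem_filter.mp hg
        have hm : t ∈ Finset.Icc 1 (τ g) := Finset.mem_Icc.mpr ⟨h1t, hgt⟩
        rw [← hSdc g] at hm
        exact (Finset.mem_filter.mp hm).2
      have := le_trans (hrle f hf t (Finset.mem_Icc.mp ht).2) (Finset.card_le_card hsub2)
      exact_mod_cast this
    have hstep : ∀ t ∈ Finset.Icc 1 T,
        ((Fs t).card : ℝ)⁻¹ * ∑ f ∈ Fs t, D (f (x t)) (fstar (x t))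
        = ∑ f ∈ F, (if f ∈ Fs t then ((Fs t).card : ℝ)⁻¹ * D (f (x t)) (fstar (x t)) else 0) := by
      intro t _
      rw [Finset.sum_ite_mem, Finset.inter_eq_right.mpr (hFsub t), Finset.mul_sum]
    calc ∑ t ∈ Finset.Icc 1 T, ((Fs t).card : ℝ)⁻¹ * ∑ f ∈ Fs t, D (f (x t)) (fstar (x t))
        = ∑ t ∈ Finset.Icc 1 T, ∑ f ∈ F,
            (if f ∈ Fs t then ((Fs t).card : ℝ)⁻¹ * D (f (x t)) (fstar (x t)) else 0) :=
          Finset.sum_congr rfl hstep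
      _ = ∑ f ∈ F, ∑ t ∈ Finset.Icc 1 T,
            (if f ∈ Fs t then ((Fs t).card : ℝ)⁻¹ * D (f (x t)) (fstar (x t)) else 0) :=
          Finset.sum_comm
      _ ≤ ∑ f ∈ F, (if f = fstar then 0 else (2*C*β+1) * ((r f : ℝ))⁻¹) := by
          apply Finset.sum_le_sum
          intro f hf
          by_cases hfe : f = fstar
          · subst hfe
            simp [hDdiag]
          · rw [if_neg hfe, ← Finset.sum_filter, hSdc f]
            have hrpos : (0:ℝ) < (r f : ℝ) := by exact_mod_cast hr1 f hf
            calc ∑ t ∈ Finset.Icc 1 (τ f), ((Fs t).card : ℝ)⁻¹ * D (f (x t)) (fstar (x t))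
                ≤ ∑ t ∈ Finset.Icc 1 (τ f), ((r f : ℝ))⁻¹ * D (f (x t)) (fstar (x t)) := by
                  apply Finset.sum_le_sum
                  intro t ht
                  exact mul_le_mul_of_nonneg_right
                    (inv_anti₀ hrpos (hrn f hf t ht)) (hdnn t f)
              _ = ((r f : ℝ))⁻¹ * ∑ t ∈ Finset.Icc 1 (τ f), D (f (x t)) (fstar (x t)) := by
                  rw [Finset.mul_sum]
              _ ≤ ((r f : ℝ))⁻¹ * (2*C*β+1) :=
                  mul_le_mul_of_nonneg_left (hbudget f hf) (by positivity)
              _ = (2*C*β+1) * ((r f : ℝ))⁻¹ := mul_comm _ _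
      _ = ∑ f ∈ F.erase fstar, (2*C*β+1) * ((r f : ℝ))⁻¹ := by
          rw [← Finset.add_sum_erase F _ hfstar, if_pos rfl, zero_add]
          exact Finset.sum_congr rfl (fun f hf => if_neg (Finset.ne_of_mem_erase hf))
      _ = (2*C*β+1) * ∑ f ∈ F.erase fstar, ((r f : ℝ))⁻¹ := by rw [Finset.mul_sum]
      _ ≤ (2*C*β+1) * Real.log F.card := mul_le_mul_of_nonneg_left hrsum hB1
  · -- Bound 3 : 3(2Cβ+1)|X|(1+log T)
    let c : ℕ → ℕ := fun t => ((Finset.Icc 1 t).filter (fun s => x s = x t)).card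
    have hc1 : ∀ t, 1 ≤ t → 1 ≤ c t := fun t ht => Finset.card_pos.mpr
      ⟨t, Finset.mem_filter.mpr ⟨Finset.mem_Icc.mpr ⟨ht, le_refl _⟩, rfl⟩⟩
    have hcleT : ∀ t, c t ≤ t := by
      intro t
      show ((Finset.Icc 1 t).filter (fun s => x s = x t)).card ≤ t
      calc ((Finset.Icc 1 t).filter (fun s => x s = x t)).card
          ≤ (Finset.Icc 1 t).card := Finset.card_le_card (Finset.filter_subset _ _)
        _ ≤ t := by rw [Nat.card_Icc]; omega
    have hkey : ∀ t ∈ Finset.Icc 1 T, ∀ f ∈ Fs t,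
        (c t : ℝ) * D (f (x t)) (fstar (x t)) ≤ 2*C*β + 1 := by
      intro t ht f hf
      have ht' := Finset.mem_Icc.mp ht
      have hsplit : (Finset.Icc 1 t).filter (fun s => x s = x t)
          = insert t ((Finset.Icc 1 (t-1)).filter (fun s => x s = x t)) := by
        ext s
        simp only [Finset.mem_filter, Finset.mem_insert, Finset.mem_Icc]
        constructor
        · rintro ⟨⟨h1, h2⟩, hp⟩
          rcases eq_or_lt_of_le h2 with rfl | h2'
          · left; rfl
          · right; exact ⟨⟨h1, by omega⟩, hp⟩
        · rintro (rfl | ⟨⟨h1, h2⟩, hp⟩)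
          · exact ⟨⟨ht'.1, le_refl _⟩, rfl⟩
          · exact ⟨⟨h1, by omega⟩, hp⟩
      have hnot : t ∉ (Finset.Icc 1 (t-1)).filter (fun s => x s = x t) := by
        simp only [Finset.mem_filter, Finset.mem_Icc]
        rintro ⟨⟨h1, h2⟩, -⟩
        omega
      have hcard : c t = ((Finset.Icc 1 (t-1)).filter (fun s => x s = x t)).card + 1 := by
        show ((Finset.Icc 1 t).filter (fun s => x s = x t)).card = _
        rw [hsplit, Finset.card_insert_of_notMem hnot]
      set k := ((Finset.Icc 1 (t-1)).filter (fun s => x s = x t)).card with hkdef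
      have he : ∑ s ∈ (Finset.Icc 1 (t-1)).filter (fun s => x s = x t),
          D (f (x s)) (fstar (x s)) = (k:ℝ) * D (f (x t)) (fstar (x t)) := by
        calc ∑ s ∈ (Finset.Icc 1 (t-1)).filter (fun s => x s = x t), D (f (x s)) (fstar (x s))
            = ∑ s ∈ (Finset.Icc 1 (t-1)).filter (fun s => x s = x t),
                D (f (x t)) (fstar (x t)) :=
              Finset.sum_congr rfl (fun s hs => by rw [(Finset.mem_filter.mp hs).2])
          _ = (k:ℝ) * D (f (x t)) (fstar (x t)) := by rw [Finset.sum_const, nsmul_eq_mul]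
      have hksum : (k:ℝ) * D (f (x t)) (fstar (x t)) ≤ 2*C*β := by
        rw [← he]
        exact le_trans
          (Finset.sum_le_sum_of_subset_of_nonneg (Finset.filter_subset _ _)
            (fun s _ _ => hdnn s f))
          (hL2 t ht f hf)
      have hck : (c t : ℝ) = (k : ℝ) + 1 := by rw [hcard]; push_cast; ring
      have hd1 := hdle1 t f
      have hexp : ((k:ℝ) + 1) * D (f (x t)) (fstar (x t))
          = (k:ℝ) * D (f (x t)) (fstar (x t)) + D (f (x t)) (fstar (x t)) := by ring
      rw [hck, hexp]
      linarith
    have hstep3 : ∀ t ∈ Finset.Icc 1 T,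
        ((Fs t).card : ℝ)⁻¹ * ∑ f ∈ Fs t, D (f (x t)) (fstar (x t))
          ≤ (2*C*β+1) * ((c t : ℝ))⁻¹ := by
      intro t ht
      have hnpos : (0:ℝ) < ((Fs t).card : ℝ) := by
        exact_mod_cast Finset.card_pos.mpr ⟨fstar, hpart1 t ht⟩
      have hcpos : (0:ℝ) < (c t : ℝ) := by exact_mod_cast hc1 t (Finset.mem_Icc.mp ht).1
      have hsum : ∀ f ∈ Fs t, D (f (x t)) (fstar (x t)) ≤ (2*C*β+1) * ((c t : ℝ))⁻¹ := by
        intro f hf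
        rw [← div_eq_mul_inv, le_div_iff₀ hcpos]
        calc D (f (x t)) (fstar (x t)) * (c t : ℝ)
            = (c t : ℝ) * D (f (x t)) (fstar (x t)) := mul_comm _ _
          _ ≤ 2*C*β+1 := hkey t ht f hf
      calc ((Fs t).card : ℝ)⁻¹ * ∑ f ∈ Fs t, D (f (x t)) (fstar (x t))
          ≤ ((Fs t).card : ℝ)⁻¹ * ((Fs t).card • ((2*C*β+1) * ((c t : ℝ))⁻¹)) :=
            mul_le_mul_of_nonneg_left (Finset.sum_le_card_nsmul _ _ _ hsum) (by positivity)
        _ = (2*C*β+1) * ((c t : ℝ))⁻¹ := by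
            rw [nsmul_eq_mul, inv_mul_cancel_left₀ (ne_of_gt hnpos)]
    have hcmono : ∀ s t, 1 ≤ s → s < t → x s = x t → c s < c t := by
      intro s t h1 hst hx
      apply Finset.card_lt_card
      rw [Finset.ssubset_iff_of_subset]
      · refine ⟨t, Finset.mem_filter.mpr ⟨Finset.mem_Icc.mpr ⟨by omega, le_refl _⟩, rfl⟩, ?_⟩
        intro hmem
        have := (Finset.mem_Icc.mp (Finset.mem_filter.mp hmem).1).2
        omega
      · intro u hu
        obtain ⟨huI, hup⟩ := Finset.mem_filter.mp hu
        have huI' := Finset.mem_Icc.mp huI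
        exact Finset.mem_filter.mpr ⟨Finset.mem_Icc.mpr ⟨huI'.1, by omega⟩, by rw [hup, hx]⟩
    have hinj : ∀ s ∈ Finset.Icc 1 T, ∀ t ∈ Finset.Icc 1 T,
        (fun u => (x u, c u)) s = (fun u => (x u, c u)) t → s = t := by
      intro s hs t ht h
      simp only [Prod.mk.injEq] at h
      by_contra hne
      have hs' := Finset.mem_Icc.mp hs
      have ht' := Finset.mem_Icc.mp ht
      rcases lt_or_gt_of_ne hne with hlt | hgt
      · exact absurd h.2 (Nat.ne_of_lt (hcmono s t hs'.1 hlt h.1))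
      · exact absurd h.2 (Nat.ne_of_gt (hcmono t s ht'.1 hgt h.1.symm))
    have himg : (Finset.Icc 1 T).image (fun u => (x u, c u))
        ⊆ Finset.univ ×ˢ Finset.Icc 1 T := by
      intro p hp
      obtain ⟨t, ht, rfl⟩ := Finset.mem_image.mp hp
      have ht' := Finset.mem_Icc.mp ht
      exact Finset.mem_product.mpr ⟨Finset.mem_univ _,
        Finset.mem_Icc.mpr ⟨hc1 t ht'.1, le_trans (hcleT t) ht'.2⟩⟩
    have hsum3 : ∑ t ∈ Finset.Icc 1 T, ((c t : ℝ))⁻¹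
        ≤ (Fintype.card X : ℝ) * (1 + Real.log T) := by
      calc ∑ t ∈ Finset.Icc 1 T, ((c t : ℝ))⁻¹
          = ∑ p ∈ (Finset.Icc 1 T).image (fun u => (x u, c u)), ((p.2 : ℝ))⁻¹ := by
            rw [Finset.sum_image hinj]
        _ ≤ ∑ p ∈ Finset.univ ×ˢ Finset.Icc 1 T, ((p.2 : ℝ))⁻¹ :=
            Finset.sum_le_sum_of_subset_of_nonneg himg (fun p _ _ => by positivity)
        _ = (Fintype.card X : ℝ) * ∑ j ∈ Finset.Icc 1 T, ((j : ℝ))⁻¹ := by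
            rw [Finset.sum_product]
            simp only [Finset.sum_const, nsmul_eq_mul, Finset.card_univ]
        _ ≤ (Fintype.card X : ℝ) * (1 + Real.log T) :=
            mul_le_mul_of_nonneg_left (sum_Icc_one_inv_le T) (by positivity)
    calc ∑ t ∈ Finset.Icc 1 T, ((Fs t).card : ℝ)⁻¹ * ∑ f ∈ Fs t, D (f (x t)) (fstar (x t))
        ≤ ∑ t ∈ Finset.Icc 1 T, (2*C*β+1) * ((c t : ℝ))⁻¹ := Finset.sum_le_sum hstep3
      _ = (2*C*β+1) * ∑ t ∈ Finset.Icc 1 T, ((c t : ℝ))⁻¹ := by rw [Finset.mul_sum]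
      _ ≤ (2*C*β+1) * ((Fintype.card X : ℝ) * (1 + Real.log T)) :=
          mul_le_mul_of_nonneg_left hsum3 hB1
      _ ≤ 3 * (2 * C * β + 1) * (Fintype.card X) * (1 + Real.log T) := by
          have hX : (1:ℝ) ≤ (Fintype.card X : ℝ) := by exact_mod_cast Fintype.card_pos
          have hlT : (0:ℝ) ≤ Real.log T := Real.log_nonneg (by exact_mod_cast hT)
          nlinarith [mul_nonneg (mul_nonneg hB1 (by positivity : (0:ℝ) ≤ (Fintype.card X : ℝ)))
            (by linarith : (0:ℝ) ≤ 1 + Real.log T)]
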